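/- arXiv:1810.11765 — 6 statements merged into one kernel-verified Lean document; each statement's English description precedes it below -/
import Mathlib

section
/- Consider a valid flip sequence on a container of 64 bits, and a higher-level bit b that is initially consistent with the container, i.e., b equals the indicator that at least one container bit is true in the initial state. Let SF and CL be the numbers of set-first and clear-last operations in the sequence. Then b + (SF − CL) lies in {0, 1}, and b + (SF − CL) equals the indicator that at least one container bit is true in the final state. Hence the multiset of SF set operations and CL clear operations generated for the higher-level bit is legal with respect to b, and after these generated operations are executed the higher-level bit is again consistent with the container. -/
/-- Apply an operation `o = (pos, b)` to a container state `s`: set bit `pos` to `b`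
(`b = true` corresponds to a set operation, `b = false` to a clear operation). -/
def applyOp (s : Fin 64 → Bool) (o : Fin 64 × Bool) : Fin 64 → Bool :=
  Function.update s o.1 o.2

/-- `ValidFlipSeq s ops` means that the sequence of operations `ops`, applied in
order to the container with initial state `s`, actually flips each designated bit. -/
def ValidFlipSeq : (Fin 64 → Bool) → List (Fin 64 × Bool) → Prop
  | _, [] => True
  | s, o :: rest => s o.1 = !o.2 ∧ ValidFlipSeq (applyOp s o) rest

/-- The final state of the container after applying all operations in order. -/
def finalState (s : Fin 64 → Bool) (ops : List (Fin 64 × Bool)) : Fin 64 → Bool :=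
  ops.foldl applyOp s

/-- The number of set-first operations in the sequence: set operations performed
when, immediately before, all 64 bits of the container are false. -/
def countSetFirst : (Fin 64 → Bool) → List (Fin 64 × Bool) → ℕ
  | _, [] => 0
  | s, o :: rest =>
      (if o.2 = true ∧ ∀ i, s i = false then 1 else 0) + countSetFirst (applyOp s o) rest

/-- The number of clear-last operations in the sequence: clear operations after
which, immediately, all 64 bits of the container are false. -/
def countClearLast : (Fin 64 → Bool) → List (Fin 64 × Bool) → ℕ
  | _, [] => 0
  | s, o :: rest =>
      (if o.2 = false ∧ ∀ i, applyOp s o i = false then 1 else 0) +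
        countClearLast (applyOp s o) rest

lemma key_lemma : ∀ (ops : List (Fin 64 × Bool)) (s : Fin 64 → Bool),
    ValidFlipSeq s ops →
    (if ∃ i, s i = true then (1 : ℤ) else 0) + (countSetFirst s ops : ℤ)
      - (countClearLast s ops : ℤ)
    = (if ∃ i, finalState s ops i = true then (1 : ℤ) else 0)
  | [], s, _ => by simp [countSetFirst, countClearLast, finalState]; exact if_congr Iff.rfl rfl rfl
  | o :: rest, s, h => by
    obtain ⟨hflip, hrest⟩ := h
    have ih := key_lemma rest (applyOp s o) hrest
    have hfinal : finalState s (o :: rest) = finalState (applyOp s o) rest := rfl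
    rw [hfinal]
    simp only [countSetFirst, countClearLast]
    push_cast
    rw [← ih]
    have hstep : (if ∃ i, s i = true then (1 : ℤ) else 0)
        + (if o.2 = true ∧ ∀ i, s i = false then (1 : ℤ) else 0)
        - (if o.2 = false ∧ ∀ i, applyOp s o i = false then (1 : ℤ) else 0)
        = (if ∃ i, applyOp s o i = true then (1 : ℤ) else 0) := by
      by_cases hA : ∃ i, s i = true
      · rw [if_pos hA, if_neg (fun hB => by
          obtain ⟨i, hi⟩ := hA; rw [hB.2 i] at hi; exact absurd hi (by simp))]
        by_cases hC : o.2 = false ∧ ∀ i, applyOp s o i = false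
        · rw [if_pos hC, if_neg (fun hD => by
            obtain ⟨i, hi⟩ := hD; rw [hC.2 i] at hi; exact absurd hi (by simp))]
          ring
        · have hD : ∃ i, applyOp s o i = true := by
            obtain ⟨i, hi⟩ := hA
            by_cases hne : i = o.1
            · subst hne
              have hb : o.2 = false := by
                rw [hi] at hflip; simpa using hflip.symm
              simp only [hb, not_and, true_implies, not_forall] at hC
              obtain ⟨j, hj⟩ := hC
              exact ⟨j, by simpa using hj⟩
            · exact ⟨i, by simp [applyOp, Function.update_of_ne hne, hi]⟩
          rw [if_neg hC, if_pos hD]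
          ring
      · have hall : ∀ i, s i = false := by
          intro i
          by_contra hne
          exact hA ⟨i, by simpa using hne⟩
        have hb : o.2 = true := by
          rw [hall o.1] at hflip; simpa using hflip.symm
        rw [if_neg hA, if_pos ⟨hb, hall⟩, if_neg (by simp [hb]),
          if_pos ⟨o.1, by simp [applyOp, hb]⟩]
        ring
    linarith [hstep]

/-- Consider a valid flip sequence on a container of 64 bits, and a higher-level
bit `b` that is initially consistent with the container (it equals the indicator
that at least one container bit is true in the initial state). With `SF` and `CL`
the numbers of set-first and clear-last operations: `SF − CL ∈ {-1, 0, 1}` (so the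
generated multiset of `SF` sets and `CL` clears is legal w.r.t. `b`),
`b + (SF − CL) ∈ {0, 1}`, and `b + (SF − CL)` equals the indicator that at least
one container bit is true in the final state (so the higher-level bit is again
consistent after executing the generated operations). -/
theorem stmt2 (s : Fin 64 → Bool) (ops : List (Fin 64 × Bool)) (b : Bool)
    (h : ValidFlipSeq s ops)
    (hcons : (b.toNat : ℤ) = (if ∃ i, s i = true then (1 : ℤ) else 0)) :
    ((countSetFirst s ops : ℤ) - (countClearLast s ops : ℤ) ∈ ({-1, 0, 1} : Set ℤ)) ∧
    ((b.toNat : ℤ) + ((countSetFirst s ops : ℤ) - (countClearLast s ops : ℤ))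
        ∈ ({0, 1} : Set ℤ)) ∧
    ((b.toNat : ℤ) + ((countSetFirst s ops : ℤ) - (countClearLast s ops : ℤ))
        = (if ∃ i, finalState s ops i = true then (1 : ℤ) else 0)) := by
  have key := key_lemma ops s h
  rw [hcons]
  refine ⟨?_, ?_, by linarith⟩
  · by_cases h1 : ∃ i, s i = true <;> by_cases h2 : ∃ i, finalState s ops i = true <;>
      simp [h1, h2] at key hcons ⊢ <;> omega
  · by_cases h2 : ∃ i, finalState s ops i = true <;> simp [h2] at key ⊢ <;> omega
end

section
/- Let L : ℕ and let v₀ : ℕ → Bool be the bits of a level-0 bitmap. Define the higher-level bitmaps recursively by v_{l+1}(i) = ⋁_{k < 64} v_l(64·i + k) for each l < L and i : ℕ. Then for every l ≤ L and every index i, v_l(i) = true if and only if there exists j < 64^l such that v₀(64^l · i + j) = true. In particular, a top-down traversal of a consistent hierarchical bitmap that descends only into containers whose higher-level bit is set finds a set level-0 bit if and only if one exists in the corresponding subtree. -/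
/-- Hierarchical bitmap consistency: let `v l` be the level-`l` bitmap (level 0 is
the bit array `v₀`), where for every level `l < L`, bit `i` of level `l + 1` is the
disjunction of the 64 bits `64·i, …, 64·i + 63` of level `l`. Then for every
`l ≤ L` and every index `i`, bit `i` at level `l` is set if and only if some
level-0 bit `64^l · i + j` with `j < 64^l` is set: a top-down traversal that
descends only into containers whose higher-level bit is set finds a set level-0
bit iff one exists in the corresponding subtree. -/
theorem stmt3 (L : ℕ) (v : ℕ → ℕ → Bool)
    (hrec : ∀ l < L, ∀ i : ℕ,
      (v (l + 1) i = true ↔ ∃ k < 64, v l (64 * i + k) = true)) :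
    ∀ l ≤ L, ∀ i : ℕ,
      (v l i = true ↔ ∃ j < 64 ^ l, v 0 (64 ^ l * i + j) = true) := by
  intro l
  induction l with
  | zero => intro _ i; simp
  | succ l ih =>
    intro hl i
    have hlL : l < L := Nat.lt_of_lt_of_le (Nat.lt_succ_self l) hl
    rw [hrec l hlL i]
    constructor
    · rintro ⟨k, hk, hv⟩
      obtain ⟨j, hj, hv0⟩ := (ih (le_of_lt hlL) (64 * i + k)).mp hv
      refine ⟨64 ^ l * k + j, ?_, ?_⟩
      · calc 64 ^ l * k + j < 64 ^ l * k + 64 ^ l := by omega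
          _ = 64 ^ l * (k + 1) := by ring
          _ ≤ 64 ^ l * 64 := by exact Nat.mul_le_mul_left _ (by omega)
          _ = 64 ^ (l + 1) := by ring
      · have : 64 ^ (l + 1) * i + (64 ^ l * k + j) = 64 ^ l * (64 * i + k) + j := by ring
        rw [this]; exact hv0
    · rintro ⟨j, hj, hv0⟩
      refine ⟨j / 64 ^ l, ?_, ?_⟩
      · have h64 : 0 < 64 ^ l := Nat.pow_pos (by norm_num)
        have : j < 64 ^ l * 64 := by rw [show 64 ^ l * 64 = 64 ^ (l+1) by ring]; exact hj
        exact Nat.div_lt_of_lt_mul (by rwa [Nat.mul_comm] at this)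
      · apply (ih (le_of_lt hlL) (64 * i + j / 64 ^ l)).mpr
        refine ⟨j % 64 ^ l, Nat.mod_lt _ (Nat.pow_pos (by norm_num)), ?_⟩
        have : 64 ^ l * (64 * i + j / 64 ^ l) + j % 64 ^ l = 64 ^ (l + 1) * i + j := by
          have h := Nat.div_add_mod j (64 ^ l)
          calc 64 ^ l * (64 * i + j / 64 ^ l) + j % 64 ^ l
              = 64 ^ l * 64 * i + (64 ^ l * (j / 64 ^ l) + j % 64 ^ l) := by ring
            _ = 64 ^ (l + 1) * i + j := by rw [h]; ring
        rw [this]; exact hv0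
end

section
/- Let O be a legal multiset of set/clear operations on a finite family of Boolean bits with initial state v, and suppose O is nonempty. Then some operation in O is applicable to v (i.e., O contains a set operation on a bit whose current value is false, or a clear operation on a bit whose current value is true). Moreover, after applying any applicable operation of O and removing it from O, the remaining multiset is legal with respect to the resulting state. -/
/-- A multiset `O` of set/clear operations (an operation `(k, b)` sets bit `k` to
`b`; `b = true` is a set, `b = false` is a clear) on a family of bits with state
`v` is legal if for every bit `k` the set-surplus
`S(k) = (#set ops on k) − (#clear ops on k)`, as an integer, lies in `{-1, 0, 1}`
and `v k + S(k) ∈ {0, 1}` (identifying `false` with 0 and `true` with 1). -/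
def Legal {ι : Type*} [DecidableEq ι] (O : Multiset (ι × Bool)) (v : ι → Bool) : Prop :=
  ∀ k : ι,
    ((O.count (k, true) : ℤ) - (O.count (k, false) : ℤ) ∈ ({-1, 0, 1} : Set ℤ)) ∧
    (((v k).toNat : ℤ) + ((O.count (k, true) : ℤ) - (O.count (k, false) : ℤ))
        ∈ ({0, 1} : Set ℤ))

/-- Let `O` be a nonempty legal multiset of set/clear operations on a finite family
of Boolean bits with initial state `v`. Then some operation in `O` is applicable
to `v` (it actually flips its designated bit: a set on a currently-false bit or a
clear on a currently-true bit). Moreover, after applying any applicable operation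
of `O` and removing it from `O`, the remaining multiset is legal with respect to
the resulting state. -/
theorem stmt4 {ι : Type*} [Fintype ι] [DecidableEq ι]
    (O : Multiset (ι × Bool)) (v : ι → Bool) (hO : Legal O v) (hne : O ≠ 0) :
    (∃ op ∈ O, v op.1 = !op.2) ∧
    (∀ op ∈ O, v op.1 = !op.2 →
      Legal (O.erase op) (Function.update v op.1 op.2)) := by
  constructor
  · obtain ⟨⟨k, b⟩, hop⟩ := Multiset.exists_mem_of_ne_zero hne
    by_cases h : v k = !b
    · exact ⟨(k, b), hop, h⟩
    · have hv : v k = b := by cases b <;> cases hvk : v k <;> simp_all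
      have hc : 1 ≤ O.count (k, b) := Multiset.one_le_count_iff_mem.mpr hop
      refine ⟨(k, !b), ?_, by simp [hv]⟩
      rw [← Multiset.one_le_count_iff_mem]
      obtain ⟨hS, hsum⟩ := hO k
      simp only [Set.mem_insert_iff, Set.mem_singleton_iff] at hS hsum
      cases b <;> simp [hv] at hsum hc ⊢ <;> omega
  · rintro ⟨k, b⟩ hop hvk
    intro j
    obtain ⟨hS, hsum⟩ := hO j
    simp only [Set.mem_insert_iff, Set.mem_singleton_iff] at hS hsum ⊢
    have hc : 1 ≤ O.count (k, b) := Multiset.one_le_count_iff_mem.mpr hop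
    by_cases hj : j = k
    · subst hj
      have h1 : (O.erase (j, b)).count (j, b) = O.count (j, b) - 1 :=
        Multiset.count_erase_self _ _
      have h2 : (O.erase (j, b)).count (j, !b) = O.count (j, !b) := by
        apply Multiset.count_erase_of_ne; simp
      rw [Function.update_self]
      cases b <;> simp only [Bool.not_true, Bool.not_false] at h1 h2 hvk <;>
        simp [hvk] at hsum <;> simp [h1, h2] <;> push_cast [Nat.cast_sub hc] <;> omega
    · have h1 : (O.erase (k, b)).count (j, true) = O.count (j, true) := by
        apply Multiset.count_erase_of_ne; simp [hj]
      have h2 : (O.erase (k, b)).count (j, false) = O.count (j, false) := by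
        apply Multiset.count_erase_of_ne; simp [hj]
      rw [Function.update_of_ne hj, h1, h2]
      exact ⟨hS, hsum⟩
end

section
/- Let N, n, r be natural numbers with 0 < N, 0 < n and N ∣ n. Then the map (tid, k) ↦ (⌊(tid + k·n) / N⌋, tid mod N), defined on the set D = {(tid, k) ∈ ℕ × ℕ | tid < n ∧ tid + k·n < r·N}, is a bijection from D onto the set {(j, p) ∈ ℕ × ℕ | j < r ∧ p < N}. That is, when the block capacity divides the number of threads, every object slot of every allocated block is processed by exactly one (thread, iteration) pair of the parallel do-all assignment. -/
/-- Let `N, n, r : ℕ` with `0 < N`, `0 < n` and `N ∣ n`. Then the map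
`(tid, k) ↦ ((tid + k·n) / N, tid % N)` is a bijection from
`D = {(tid, k) | tid < n ∧ tid + k·n < r·N}` onto `{(j, p) | j < r ∧ p < N}`:
when the block capacity divides the number of threads, every object slot of every
allocated block is processed by exactly one (thread, iteration) pair of the
parallel do-all assignment. -/
theorem stmt8 (N n r : ℕ) (hN : 0 < N) (hn : 0 < n) (hdvd : N ∣ n) :
    Set.BijOn (fun p : ℕ × ℕ => ((p.1 + p.2 * n) / N, p.1 % N))
      {p : ℕ × ℕ | p.1 < n ∧ p.1 + p.2 * n < r * N}
      {q : ℕ × ℕ | q.1 < r ∧ q.2 < N} := by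
  have hmulmod : ∀ a b : ℕ, (a + b * n) % N = a % N := by
    intro a b
    obtain ⟨m, rfl⟩ := hdvd
    have : b * (N * m) = N * (b * m) := by ring
    rw [this, Nat.add_mul_mod_self_left]
  refine ⟨?_, ?_, ?_⟩
  · rintro ⟨a, b⟩ ⟨ha, hb⟩
    exact ⟨Nat.div_lt_of_lt_mul (by rw [Nat.mul_comm N r]; exact hb), Nat.mod_lt _ hN⟩
  · rintro ⟨a, b⟩ ⟨ha, hb⟩ ⟨c, d⟩ ⟨hc, hd⟩ heq
    simp only [Prod.mk.injEq] at heq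
    obtain ⟨h1, h2⟩ := heq
    have hsum : a + b * n = c + d * n := by
      have e1 : a + b * n = N * ((a + b * n) / N) + (a + b * n) % N :=
        (Nat.div_add_mod _ _).symm
      have e2 : c + d * n = N * ((c + d * n) / N) + (c + d * n) % N :=
        (Nat.div_add_mod _ _).symm
      rw [e1, e2, h1, hmulmod, hmulmod, h2]
    have hac : a = c := by
      have e1 : (a + b * n) % n = a % n := Nat.add_mul_mod_self_right a b n
      have e2 : (c + d * n) % n = c % n := Nat.add_mul_mod_self_right c d n
      have : a % n = c % n := by rw [← e1, ← e2, hsum]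
      rwa [Nat.mod_eq_of_lt ha, Nat.mod_eq_of_lt hc] at this
    have hbd : b = d := by
      subst hac
      have : b * n = d * n := by omega
      exact Nat.eq_of_mul_eq_mul_right hn this
    simp [hac, hbd]
  · rintro ⟨j, p⟩ ⟨hj, hp⟩
    refine ⟨((j * N + p) % n, (j * N + p) / n), ⟨Nat.mod_lt _ hn, ?_⟩, ?_⟩
    · dsimp only
      have : (j * N + p) % n + (j * N + p) / n * n = j * N + p := Nat.mod_add_div' _ _
      have hlt : j * N + p < r * N := by nlinarith
      omega
    · have hrw : (j * N + p) % n + (j * N + p) / n * n = j * N + p :=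
        Nat.mod_add_div' _ _
      simp only [hrw, Prod.mk.injEq]
      constructor
      · rw [Nat.mul_comm j N, Nat.mul_add_div hN, Nat.div_eq_of_lt hp]
        omega
      · rw [Nat.mod_mod_of_dvd _ hdvd, Nat.mul_comm j N, Nat.mul_add_mod,
          Nat.mod_eq_of_lt hp]
end

section
/- Let b be a natural number and let 1 ≤ i ≤ popCount b, where popCount b is the number of indices j with Nat.testBit b j = true. Let g : ℕ → ℕ be the map g(x) = x &&& (x − 1). Then g^[i−1](b) ≠ 0, and the index of the least significant set bit of g^[i−1](b) equals the i-th smallest element of the (finite) set {j : ℕ | Nat.testBit b j = true}. That is, applying x ← x &&& (x − 1) a total of i − 1 times and then taking the least set bit yields the position of the i-th set bit of b. -/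
/-- `popCount b` is the number of indices `j` with `Nat.testBit b j = true`. -/
noncomputable def popCount (b : ℕ) : ℕ := {j : ℕ | b.testBit j = true}.ncard

private lemma key_and_pred {x l : ℕ} (hl : x.testBit l = true)
    (hmin : ∀ j < l, x.testBit j = false) (j : ℕ) :
    (x &&& (x - 1)).testBit j = (x.testBit j && !(decide (j = l))) := by
  have hmod : x % 2 ^ (l + 1) = 2 ^ l := by
    apply Nat.eq_of_testBit_eq
    intro k
    rw [Nat.testBit_mod_two_pow, Nat.testBit_two_pow]
    rcases lt_trichotomy k l with h | rfl | h
    · have h1 : l ≠ k := by omega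
      simp [hmin k h, h1]
    · simp [hl]
    · have h1 : ¬ k < l + 1 := by omega
      have h2 : l ≠ k := by omega
      simp [h1, h2]
  set q := x / 2 ^ (l + 1) with hqdef
  have hx : x = 2 ^ (l + 1) * q + 2 ^ l := by
    conv_lhs => rw [← Nat.div_add_mod x (2 ^ (l + 1))]
    rw [hmod]
  have hpos : 1 ≤ 2 ^ l := Nat.one_le_two_pow
  have h2 : (2 : ℕ) ^ l < 2 ^ (l + 1) := by
    have := Nat.pow_lt_pow_succ (a := 2) (by norm_num) (n := l); simpa using this
  have hx1 : x - 1 = 2 ^ (l + 1) * q + (2 ^ l - 1) := by omega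
  have e1 : ∀ k, x.testBit k =
      if k < l + 1 then ((2 : ℕ) ^ l).testBit k else q.testBit (k - (l + 1)) := by
    intro k
    conv_lhs => rw [hx]
    exact Nat.testBit_two_pow_mul_add q h2 k
  have e2 : (x - 1).testBit j =
      if j < l + 1 then ((2 : ℕ) ^ l - 1).testBit j else q.testBit (j - (l + 1)) := by
    rw [hx1]
    exact Nat.testBit_two_pow_mul_add q (by omega) j
  rw [Nat.testBit_and, e1 j, e2]
  rcases lt_trichotomy j l with h | rfl | h
  · have h1 : j < l + 1 := by omega
    have h2 : l ≠ j := by omega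
    simp [h1, h2, Nat.testBit_two_pow]
  · simp [Nat.testBit_two_pow_sub_one]
  · have h1 : ¬ j < l + 1 := by omega
    have h2 : j ≠ l := by omega
    rw [if_neg h1, if_neg h1]
    simp [h2]

/-- Let `1 ≤ i ≤ popCount b` and `g x = x &&& (x − 1)`. Then `g^[i−1] b ≠ 0`, and
the index of the least significant set bit of `g^[i−1] b` (i.e., the least element
of its set of set-bit indices) equals the `i`-th smallest element of
`{j | Nat.testBit b j = true}` (the `(i−1)`-th in 0-indexed counting, `Nat.nth`):
applying `x ← x &&& (x − 1)` a total of `i − 1` times and then taking the least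
set bit yields the position of the `i`-th set bit of `b`. -/
theorem stmt10 (b i : ℕ) (h1 : 1 ≤ i) (h2 : i ≤ popCount b) :
    (fun x : ℕ => x &&& (x - 1))^[i - 1] b ≠ 0 ∧
    IsLeast {j : ℕ | Nat.testBit ((fun x : ℕ => x &&& (x - 1))^[i - 1] b) j = true}
      (Nat.nth (fun j : ℕ => Nat.testBit b j = true) (i - 1)) := by
  set p : ℕ → Prop := fun j : ℕ => Nat.testBit b j = true with hp
  have hf : (setOf p).Finite := by
    apply (Set.finite_Iic b).subset
    intro j hj
    have h2j : 2 ^ j ≤ b := Nat.ge_two_pow_of_testBit hj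
    have := Nat.lt_two_pow_self (n := j)
    simp only [Set.mem_Iic]; omega
  have hN : popCount b = hf.toFinset.card := Set.ncard_eq_toFinset_card _ hf
  have hmain : ∀ k, k < hf.toFinset.card → ∀ j,
      ((fun x : ℕ => x &&& (x - 1))^[k] b).testBit j = true ↔ (p j ∧ Nat.nth p k ≤ j) := by
    intro k
    induction k with
    | zero =>
      intro hk j
      simp only [Function.iterate_zero, id_eq]
      constructor
      · intro hj
        refine ⟨hj, ?_⟩
        rw [Nat.nth_zero]
        exact Nat.sInf_le hj
      · exact fun h => h.1
    | succ k ih =>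
      intro hk j
      have hkk : k < hf.toFinset.card := by omega
      have ihk := ih hkk
      set y := (fun x : ℕ => x &&& (x - 1))^[k] b with hy
      have hnth_mem : p (Nat.nth p k) := Nat.nth_mem_of_lt_card hf hkk
      have hyl : y.testBit (Nat.nth p k) = true := (ihk _).2 ⟨hnth_mem, le_refl _⟩
      have hymin : ∀ j < Nat.nth p k, y.testBit j = false := by
        intro j hj
        by_contra hcon
        have : y.testBit j = true := by
          cases h : y.testBit j with
          | false => exact absurd h hcon
          | true => rfl
        have := ((ihk j).1 this).2
        omega
      rw [Function.iterate_succ_apply']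
      show (y &&& (y - 1)).testBit j = true ↔ _
      rw [key_and_pred hyl hymin j]
      rw [Bool.and_eq_true, Bool.not_eq_true', decide_eq_false_iff_not, ihk j]
      constructor
      · rintro ⟨⟨hpj, hle⟩, hne⟩
        refine ⟨hpj, ?_⟩
        obtain ⟨m, hm, hmj⟩ := Nat.exists_lt_card_finite_nth_eq hf hpj
        have hkm : k < m := by
          rcases Nat.lt_or_ge k m with h | h
          · exact h
          · exfalso
            have := Nat.nth_le_nth_of_lt_card hf h hkk
            omega
        calc Nat.nth p (k + 1) ≤ Nat.nth p m := Nat.nth_le_nth_of_lt_card hf (by omega) hm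
          _ = j := hmj
      · rintro ⟨hpj, hle⟩
        have hlt : Nat.nth p k < Nat.nth p (k + 1) := Nat.nth_lt_nth_of_lt_card hf (by omega) hk
        exact ⟨⟨hpj, by omega⟩, by omega⟩
  have hik : i - 1 < hf.toFinset.card := by omega
  have hiff := hmain (i - 1) hik
  have hnth_mem : p (Nat.nth p (i - 1)) := Nat.nth_mem_of_lt_card hf hik
  have hbit : ((fun x : ℕ => x &&& (x - 1))^[i - 1] b).testBit (Nat.nth p (i - 1)) = true :=
    (hiff _).2 ⟨hnth_mem, le_refl _⟩
  refine ⟨?_, ⟨hbit, ?_⟩⟩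
  · intro h0
    rw [h0] at hbit
    simp at hbit
  · intro j hj
    exact ((hiff j).1 hj).2
end

section
/- Let b be a natural number with b < 2^64 and b ≠ 2^64 − 1, and let m = (2^64 − 1) ^^^ b be the bitwise complement of b within 64 bits. Then m ≠ 0, and the index pos of the least significant set bit of m satisfies: pos < 64, Nat.testBit b pos = false, and Nat.testBit b q = true for every q < pos. That is, applying find-first-set to the 64-bit complement of a non-full object allocation bitmap returns the smallest free slot position. -/
/-- Let `b < 2^64` with `b ≠ 2^64 − 1`, and let `m = (2^64 − 1) ^^^ b` be the
bitwise complement of `b` within 64 bits. Then `m ≠ 0`, and the index `pos` of the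
least significant set bit of `m` (here `sInf {j | Nat.testBit m j = true}`)
satisfies `pos < 64`, `Nat.testBit b pos = false`, and `Nat.testBit b q = true`
for every `q < pos`: find-first-set applied to the 64-bit complement of a
non-full object allocation bitmap returns the smallest free slot position. -/
theorem stmt14 (b : ℕ) (hb : b < 2 ^ 64) (hb' : b ≠ 2 ^ 64 - 1) :
    (2 ^ 64 - 1) ^^^ b ≠ 0 ∧
    sInf {j : ℕ | Nat.testBit ((2 ^ 64 - 1) ^^^ b) j = true} < 64 ∧
    Nat.testBit b (sInf {j : ℕ | Nat.testBit ((2 ^ 64 - 1) ^^^ b) j = true}) = false ∧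
    ∀ q < sInf {j : ℕ | Nat.testBit ((2 ^ 64 - 1) ^^^ b) j = true},
      Nat.testBit b q = true := by
  set m := (2 ^ 64 - 1) ^^^ b with hm
  have hmne : m ≠ 0 := by
    intro h
    exact hb' (xor_eq_zero_iff.mp h).symm
  have hbit : ∀ j, Nat.testBit m j = ((decide (j < 64)).xor (Nat.testBit b j)) := by
    intro j
    rw [hm, Nat.testBit_xor, Nat.testBit_two_pow_sub_one]
  have hS : {j : ℕ | Nat.testBit m j = true}.Nonempty := by
    obtain ⟨i, hi⟩ := Nat.exists_testBit_of_ne_zero hmne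
    exact ⟨i, hi⟩
  set pos := sInf {j : ℕ | Nat.testBit m j = true} with hpos
  have hmem : Nat.testBit m pos = true := Nat.sInf_mem hS
  have hlt : pos < 64 := by
    by_contra h
    push_neg at h
    have hbf : Nat.testBit b pos = false :=
      Nat.testBit_eq_false_of_lt (lt_of_lt_of_le hb (Nat.pow_le_pow_right (by norm_num) h))
    rw [hbit, hbf, decide_eq_false (by omega)] at hmem
    simp at hmem
  have hbposf : Nat.testBit b pos = false := by
    rw [hbit, decide_eq_true hlt] at hmem
    cases h : Nat.testBit b pos <;> simp [h] at hmem ⊢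
  refine ⟨hmne, hlt, hbposf, ?_⟩
  intro q hq
  have hqn : Nat.testBit m q ≠ true := Nat.notMem_of_lt_sInf hq
  rw [hbit, decide_eq_true (lt_trans hq hlt)] at hqn
  cases h : Nat.testBit b q <;> simp [h] at hqn ⊢
end
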